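/- In Λ_τ([0,1)) with τ=1+√2 and τ'=1−√2, if x∈Λ and y is the smallest element of Λ strictly greater than x, then y−x ∈ {τ, 1+τ}. -/

import Mathlib

noncomputable def σ : ℝ := 1 + Real.sqrt 2
noncomputable def σ' : ℝ := 1 - Real.sqrt 2

noncomputable def Λ : Set ℝ :=
  {x : ℝ | ∃ a b : ℤ, x = a + b * σ ∧ ((a : ℝ) + b * σ') ∈ Set.Ico 0 1}

/-- In `Λ_τ([0,1))` with `τ = 1 + √2`, the gap from a point to the next point
is either `τ` or `1 + τ`. -/
theorem gaps_two_values (x y : ℝ) (hx : x ∈ Λ) (hy : y ∈ Λ) (hxy : x < y)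
    (hmin : ∀ z ∈ Λ, x < z → y ≤ z) :
    y - x = σ ∨ y - x = 1 + σ := by
  have hs2 : Real.sqrt 2 ^ 2 = 2 := Real.sq_sqrt (by norm_num)
  have h1 : (1:ℝ) < Real.sqrt 2 := by nlinarith [Real.sqrt_nonneg 2]
  have h2 : Real.sqrt 2 < 3/2 := by nlinarith [Real.sqrt_nonneg 2]
  obtain ⟨a, b, hxe, hxs0, hxs1⟩ := hx
  obtain ⟨a', b', hye, hys0, hys1⟩ := hy
  simp only [σ, σ'] at *
  have hcand : y ≤ x + (1 + (1 + Real.sqrt 2)) := by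
    by_cases h : Real.sqrt 2 - 1 ≤ (a:ℝ) + b * (1 - Real.sqrt 2)
    · have hc : x + (1 + Real.sqrt 2) ∈ Λ := by
        refine ⟨a, b + 1, ?_, ?_, ?_⟩
        · push_cast [σ]; rw [hxe]; ring
        · push_cast [σ']; nlinarith
        · push_cast [σ']; nlinarith
      have := hmin _ hc (by nlinarith)
      nlinarith
    · push_neg at h
      have hc : x + (1 + (1 + Real.sqrt 2)) ∈ Λ := by
        refine ⟨a + 1, b + 1, ?_, ?_, ?_⟩
        · push_cast [σ]; rw [hxe]; ring
        · push_cast [σ']; nlinarith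
        · push_cast [σ']; nlinarith
      have := hmin _ hc (by nlinarith)
      nlinarith
  set p : ℤ := a' - a with hp
  set q : ℤ := b' - b with hq
  have hu : y - x = (p:ℝ) + q * (1 + Real.sqrt 2) := by
    rw [hp, hq, hxe, hye]; push_cast; ring
  have hv1 : (-1:ℝ) < (p:ℝ) + q * (1 - Real.sqrt 2) := by
    rw [hp, hq]; push_cast; nlinarith
  have hv2 : (p:ℝ) + q * (1 - Real.sqrt 2) < 1 := by
    rw [hp, hq]; push_cast; nlinarith
  have hu0 : (0:ℝ) < (p:ℝ) + q * (1 + Real.sqrt 2) := by rw [← hu]; linarith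
  have hu1 : (p:ℝ) + q * (1 + Real.sqrt 2) ≤ 2 + Real.sqrt 2 := by rw [← hu]; linarith
  have hq0 : 0 ≤ q := by
    have hr : (-1:ℝ) < (q:ℝ) := by nlinarith
    have : (-1:ℤ) < q := by exact_mod_cast hr
    omega
  have hq1 : q ≤ 1 := by
    have hr : (q:ℝ) < 2 := by nlinarith
    have : q < (2:ℤ) := by exact_mod_cast hr
    omega
  interval_cases q
  · exfalso
    have hpr0 : (0:ℝ) < (p:ℝ) := by push_cast at hu0 ⊢; linarith
    have hpr1 : (p:ℝ) < 1 := by push_cast at hv2 ⊢; linarith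
    have h0 : 0 < p := by exact_mod_cast hpr0
    have h1' : p < 1 := by exact_mod_cast hpr1
    omega
  · have hp0 : 0 ≤ p := by
      have hr : (-1:ℝ) < (p:ℝ) := by push_cast at hv1 ⊢; nlinarith
      have : (-1:ℤ) < p := by exact_mod_cast hr
      omega
    have hp1 : p ≤ 1 := by
      have hr : (p:ℝ) < 2 := by push_cast at hu1 ⊢; nlinarith
      have : p < (2:ℤ) := by exact_mod_cast hr
      omega
    interval_cases p
    · left; rw [hu]; push_cast; simp [σ]
    · right; rw [hu]; push_cast; simp [σ]
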